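/- Let G be a finite simple graph, M a matching in G, C a vertex cover of G such that every vertex of C is saturated by M, and C' a vertex cover of G with |C'| ≥ |M| + 1. Then |C| ≤ 2·|C'| − 2; equivalently, (|C| : ℝ)/|C'| ≤ 2 − 2/|C'|. -/

import Mathlib

/-- If a vertex cover `C` uses only vertices saturated by the matching `M` and another
vertex cover `C'` satisfies `|C'| ≥ |M| + 1`, then `|C| ≤ 2|C'| - 2`, equivalently
`|C|/|C'| ≤ 2 - 2/|C'|`. -/
theorem matched_cover_ratio_bound {V : Type*} [Fintype V] (G : SimpleGraph V)
    (M : Finset (Sym2 V)) (C C' : Finset V)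
    (hM_edges : ∀ e ∈ M, e ∈ G.edgeSet)
    (hM_disj : ∀ e ∈ M, ∀ f ∈ M, e ≠ f → ∀ v : V, v ∈ e → v ∉ f)
    (hC : ∀ u v : V, G.Adj u v → u ∈ C ∨ v ∈ C)
    (hCsat : ∀ v ∈ C, ∃ e ∈ M, v ∈ e)
    (hC' : ∀ u v : V, G.Adj u v → u ∈ C' ∨ v ∈ C')
    (hC'card : M.card + 1 ≤ C'.card) :
    C.card ≤ 2 * C'.card - 2 ∧ (C.card : ℝ) / C'.card ≤ 2 - 2 / C'.card := by
  classical
  have hCM : C.card ≤ 2 * M.card := by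
    have hsub : C ⊆ M.biUnion (fun e => {(Quot.out e).1, (Quot.out e).2}) := by
      intro v hv
      obtain ⟨e, heM, hve⟩ := hCsat v hv
      refine Finset.mem_biUnion.2 ⟨e, heM, ?_⟩
      have : v ∈ (Sym2.mk (Quot.out e).1 (Quot.out e).2) := by rw [Sym2.mk, Quot.out_eq]; exact hve
      simp only [Finset.mem_insert, Finset.mem_singleton]
      exact Sym2.mem_iff.1 this
    calc C.card ≤ (M.biUnion (fun e => {(Quot.out e).1, (Quot.out e).2})).card :=
          Finset.card_le_card hsub
      _ ≤ ∑ e ∈ M, ({(Quot.out e).1, (Quot.out e).2} : Finset V).card :=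
          Finset.card_biUnion_le
      _ ≤ ∑ _e ∈ M, 2 := Finset.sum_le_sum (fun e _ => Finset.card_insert_le _ _ |>.trans (by simp))
      _ = 2 * M.card := by rw [Finset.sum_const, smul_eq_mul, mul_comm]
  have key : C.card + 2 ≤ 2 * C'.card := by omega
  have hc'pos : (0 : ℝ) < (C'.card : ℝ) := by
    have : 1 ≤ C'.card := by omega
    exact_mod_cast Nat.lt_of_lt_of_le Nat.zero_lt_one this
  constructor
  · omega
  · rw [div_le_iff₀ hc'pos]
    have h1 : ((C.card : ℝ)) + 2 ≤ 2 * C'.card := by exact_mod_cast key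
    have h2 : (2 - 2 / (C'.card : ℝ)) * C'.card = 2 * C'.card - 2 := by
      field_simp
    linarith
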